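/- Let α, β ∈ ℂ satisfy αβ(α+β) = −2. Then in R the following polynomial identity holds: ∂F₁/∂x₀ = (−3 + αβ(β−α)/2)·Q₀ + (−3 − αβ(β−α)/2)·Q₀′, where Q₀ = x₀²+x₃²+α(x₂x₄+x₅x₁) and Q₀′ = x₀²−x₃²+β(x₂x₄−x₅x₁). -/
import Mathlib


open MvPolynomial

noncomputable section

abbrev R6 : Type := MvPolynomial (Fin 6) ℂ

/-- The cubic `F₁`. -/
def F1 (α β : ℂ) : R6 :=
  C (2 * (α ^ 2 * β ^ 2 - α - β)) * (X 0 * X 2 * X 4)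
    - C 2 * (X 0 ^ 3 + X 2 ^ 3 + X 4 ^ 3)
    + C (2 * (β - α)) * (X 1 * X 2 * X 3 + X 3 * X 4 * X 5 + X 5 * X 0 * X 1)
    + C (α * β * (β - α)) * (X 0 * X 3 ^ 2 + X 2 * X 5 ^ 2 + X 4 * X 1 ^ 2)

def Q0 (α : ℂ) : R6 := X 0 ^ 2 + X 3 ^ 2 + C α * (X 2 * X 4 + X 5 * X 1)
def Q0' (β : ℂ) : R6 := X 0 ^ 2 - X 3 ^ 2 + C β * (X 2 * X 4 - X 5 * X 1)

/-- If `αβ(α+β) = −2`, then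
`∂F₁/∂x₀ = (−3 + αβ(β−α)/2)·Q₀ + (−3 − αβ(β−α)/2)·Q₀′`. -/
theorem pderiv_F1_x0 (α β : ℂ) (h : α * β * (α + β) = -2) :
    pderiv (0 : Fin 6) (F1 α β) =
      C (-3 + α * β * (β - α) / 2) * Q0 α + C (-3 - α * β * (β - α) / 2) * Q0' β := by
  have hC : (C α * C β * (C α + C β) : R6) = -2 := by
    rw [← map_add, ← map_mul, ← map_mul, h, map_neg, map_ofNat]
  have hc2 : (C (2 : ℂ) : R6) = 2 := map_ofNat _ 2
  have h2 : (2 : R6) * C ((2 : ℂ)⁻¹) = 1 := by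
    rw [← hc2, ← map_mul, show (2:ℂ) * (2:ℂ)⁻¹ = 1 by norm_num, map_one]
  have hp2 : pderiv (0 : Fin 6) (2 : R6) = 0 := by rw [← hc2]; exact pderiv_C
  rw [show α * β * (β - α) / 2 = α * β * (β - α) * (2:ℂ)⁻¹ from div_eq_mul_inv _ _]
  simp only [F1, Q0, Q0', map_add, map_sub, map_mul, map_neg, map_ofNat, map_pow,
    pderiv_mul, pderiv_C, pderiv_pow, pderiv_X_self,
    pderiv_X_of_ne (by decide : (2:Fin 6) ≠ 0), pderiv_X_of_ne (by decide : (4:Fin 6) ≠ 0),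
    pderiv_X_of_ne (by decide : (1:Fin 6) ≠ 0), pderiv_X_of_ne (by decide : (3:Fin 6) ≠ 0),
    pderiv_X_of_ne (by decide : (5:Fin 6) ≠ 0), smul_eq_C_mul, smul_eq_mul, nsmul_eq_mul, hp2, hc2]
  linear_combination
    ((C α + C β) * C ((2:ℂ)⁻¹) * (X 2 * X 4) - (C β - C α) * C ((2:ℂ)⁻¹) * (X 5 * X 1)) * hC
    + (-(C α * C β * (C β - C α)) * X 3 ^ 2
       - (2 * C α ^ 2 * C β ^ 2 + C α + C β) * (X 2 * X 4)
       + (C β - C α) * (X 5 * X 1)) * h2
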